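/- For every piece a ∈ Σ, the first hitting time of a is an asynchronous stopping time. -/

import Mathlib

open MeasureTheory Filter
open scoped ENNReal NNReal

namespace HeapPaper

variable {S : Type}

/-- Commutation pairs of words, generating the trace congruence. -/
def CommRel (I : S → S → Prop) (w₁ w₂ : FreeMonoid S) : Prop :=
  ∃ a b : S, I a b ∧ w₁ = FreeMonoid.of a * FreeMonoid.of b ∧
    w₂ = FreeMonoid.of b * FreeMonoid.of a

/-- The congruence on the free monoid generated by the commutation of independent pieces. -/
def HeapCon (I : S → S → Prop) : Con (FreeMonoid S) := conGen (CommRel I)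

/-- The heap monoid `M(Σ, I)`:  the presented monoid `⟨Σ | ab = ba, (a,b) ∈ I⟩`. -/
def Heap (I : S → S → Prop) := (HeapCon I).Quotient

instance (I : S → S → Prop) : Monoid (Heap I) :=
  inferInstanceAs (Monoid (HeapCon I).Quotient)

/-- The unique additive extension to heaps of a function `φ` defined on pieces. -/
def addExt {A : Type} [AddCommMonoid A] {I : S → S → Prop} (φ : S → A) : Heap I → A :=
  fun x => Multiplicative.toAdd <|
    (Con.lift (HeapCon I) (FreeMonoid.lift fun a => Multiplicative.ofAdd (φ a))
      (Con.conGen_le.2 (by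
        rintro w₁ w₂ ⟨a, b, hab, rfl, rfl⟩
        exact (Con.ker_rel _).mpr (by simp [map_mul, mul_comm])))) x

/-- The length `|x|` of a heap: the common length of its representative words. -/
def len {I : S → S → Prop} (x : Heap I) : ℕ := addExt (fun _ => 1) x

/-- The number `|x|ₐ` of occurrences of the piece `a` in the heap `x`. -/
def occ {I : S → S → Prop} [DecidableEq S] (a : S) (x : Heap I) : ℕ :=
  addExt (fun b => if b = a then 1 else 0) x

/-- The additive extension `⟨φ, x⟩` of a real-valued cost function. -/
def pairing {I : S → S → Prop} (φ : S → ℝ) (x : Heap I) : ℝ := addExt φ x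

/-- The left-divisibility order on the heap monoid. -/
def hLe {I : S → S → Prop} (x y : Heap I) : Prop := ∃ z : Heap I, y = x * z

/-- Cliques: finite sets of pairwise independent pieces. -/
def Cl (I : S → S → Prop) := {s : Finset S // ∀ a ∈ s, ∀ b ∈ s, a ≠ b → I a b}

/-- The empty clique. -/
def emptyCl (I : S → S → Prop) : Cl I := ⟨∅, by simp⟩

/-- The heap associated with a clique (product of its pieces, in any order). -/
def Cl.heap {I : S → S → Prop} (γ : Cl I) : Heap I :=
  γ.1.noncommProd (fun a => (HeapCon I).mk' (FreeMonoid.of a)) (by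
    intro a ha b hb hab
    have hI : I a b := γ.2 a ha b hb hab
    show (HeapCon I).mk' (FreeMonoid.of a) * (HeapCon I).mk' (FreeMonoid.of b)
        = (HeapCon I).mk' (FreeMonoid.of b) * (HeapCon I).mk' (FreeMonoid.of a)
    rw [← map_mul, ← map_mul]
    exact (Con.eq _).mpr (ConGen.Rel.of _ _ ⟨a, b, hI, rfl, rfl⟩))

/-- The Cartier–Foata move relation `γ → γ'` between cliques. -/
def Move {I : S → S → Prop} (γ γ' : Cl I) : Prop :=
  ∀ b ∈ γ'.1, ∃ a ∈ γ.1, ¬ I a b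

/-- The boundary `∂M`: infinite admissible sequences of nonempty cliques. -/
def Bnd (I : S → S → Prop) :=
  {ξ : ℕ → Cl I // (∀ n, (ξ n).1.Nonempty) ∧ ∀ n, Move (ξ n) (ξ (n + 1))}

/-- `M̄ = M ∪ ∂M`. -/
def MB (I : S → S → Prop) := Heap I ⊕ Bnd I

/-- Partial products of a sequence of cliques. -/
def ppSeq {I : S → S → Prop} (c : ℕ → Cl I) (n : ℕ) : Heap I :=
  ((List.range n).map fun i => (c i).heap).prod

/-- `c` is the Cartier–Foata decomposition of the heap `x`, padded with empty cliques:
`c` is admissible, eventually empty, with partial products eventually equal to `x`. -/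
def CFprop (I : S → S → Prop) (c : ℕ → Cl I) (x : Heap I) : Prop :=
  (∀ n, Move (c n) (c (n + 1))) ∧
    ∃ N, ∀ n, N ≤ n → ppSeq c n = x ∧ c n = emptyCl I

/-- The (padded) Cartier–Foata decomposition of a heap. -/
noncomputable def cf (I : S → S → Prop) (x : Heap I) : ℕ → Cl I :=
  letI := Classical.propDecidable (∃ c, CFprop I c x)
  if h : ∃ c, CFprop I c x then h.choose else fun _ => emptyCl I

/-- The Cartier–Foata sequence of an element of `M̄`. -/
noncomputable def seqOf {I : S → S → Prop} : MB I → ℕ → Cl I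
  | .inl x => cf I x
  | .inr ξ => ξ.1

/-- Partial products of the Cartier–Foata sequence of an element of `M̄`. -/
noncomputable def pp {I : S → S → Prop} (ζ : MB I) (n : ℕ) : Heap I :=
  ppSeq (seqOf ζ) n

/-- The order on `M̄`: `ξ ≤ ξ'` iff `γ₁⋯γₙ ≤ γ'₁⋯γ'ₙ` in `M` for all `n`. -/
noncomputable def mLe {I : S → S → Prop} (ζ ζ' : MB I) : Prop :=
  ∀ n : ℕ, hLe (pp ζ n) (pp ζ' n)

/-- The elementary cylinder `↑x ⊆ ∂M` of base `x ∈ M`. -/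
noncomputable def cyl {I : S → S → Prop} (x : Heap I) : Set (Bnd I) :=
  {ξ : Bnd I | mLe (.inl x) (.inr ξ)}

/-- The σ-algebra `𝔉` on `∂M` generated by the elementary cylinders. -/
noncomputable def Fsa (I : S → S → Prop) : MeasurableSpace (Bnd I) :=
  MeasurableSpace.generateFrom {A : Set (Bnd I) | ∃ x : Heap I, A = cyl x}

noncomputable instance (I : S → S → Prop) : MeasurableSpace (Bnd I) := Fsa I

/-- `ζ` is the least upper bound in `M̄` of the nondecreasing sequence `(x·γ₁⋯γₙ)ₙ`,
where `(γₙ)` is the Cartier–Foata sequence of `ξ`; this characterizes `x·ξ`. -/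
noncomputable def IsConc {I : S → S → Prop} (x : Heap I) (ξ : Bnd I) (ζ : MB I) : Prop :=
  (∀ n : ℕ, mLe (.inl (x * pp (.inr ξ) n)) ζ) ∧
    ∀ η : MB I, (∀ n : ℕ, mLe (.inl (x * pp (.inr ξ) n)) η) → mLe ζ η

/-- The concatenation `x·ξ ∈ ∂M` of a heap `x` and an infinite heap `ξ`. -/
noncomputable def concB {I : S → S → Prop} (x : Heap I) (ξ : Bnd I) : Bnd I :=
  letI := Classical.propDecidable (∃ ζ : Bnd I, IsConc x ξ (.inr ζ))
  if h : ∃ ζ : Bnd I, IsConc x ξ (.inr ζ) then h.choose else ξ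

/-- The difference `ξ − x`: the unique `ζ ∈ ∂M` with `x·ζ = ξ` (junk value if none exists). -/
noncomputable def subB {I : S → S → Prop} (ξ : Bnd I) (x : Heap I) : Bnd I :=
  letI := Classical.propDecidable (∃ ζ : Bnd I, concB x ζ = ξ)
  if h : ∃ ζ : Bnd I, concB x ζ = ξ then h.choose else ξ

/-- Asynchronous stopping time. -/
noncomputable def IsAST {I : S → S → Prop} (V : Bnd I → MB I) : Prop :=
  (∀ ξ : Bnd I, mLe (V ξ) (.inr ξ)) ∧
    ∀ (ξ ξ' : Bnd I) (x : Heap I), V ξ = .inl x → mLe (.inl x) (.inr ξ') → V ξ' = V ξ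

/-- The shift operator `θ_V` associated with an AST `V` (junk: identity outside its domain). -/
noncomputable def shiftV {I : S → S → Prop} (V : Bnd I → MB I) (ξ : Bnd I) : Bnd I :=
  match V ξ with
  | .inl x => subB ξ x
  | .inr _ => ξ

/-- The σ-algebra `𝔉_V` generated by the cylinders of the finite values of `V`. -/
noncomputable def astSA {I : S → S → Prop} (V : Bnd I → MB I) : MeasurableSpace (Bnd I) :=
  MeasurableSpace.generateFrom
    {A : Set (Bnd I) | ∃ x : Heap I, (∃ ξ : Bnd I, V ξ = .inl x) ∧ A = cyl x}

/-- The iterated sequence `(Vₙ)ₙ` of an AST `V`:  `V₀ = 0` and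
`V_{n+1}(ξ) = Vₙ(ξ)·V(ξ − Vₙ(ξ))` if `Vₙ(ξ) ∈ M`, `V_{n+1}(ξ) = ξ` otherwise. -/
noncomputable def iter {I : S → S → Prop} (V : Bnd I → MB I) : ℕ → Bnd I → MB I
  | 0, _ => .inl 1
  | n + 1, ξ =>
    match iter V n ξ with
    | .inl x =>
      match V (subB ξ x) with
      | .inl y => .inl (x * y)
      | .inr ζ => .inr (concB x ζ)
    | .inr _ => .inr ξ

/-- The increment `Δ_{n+1} = V ∘ θ_{Vₙ}` (junk value outside the domain of `θ_{Vₙ}`). -/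
noncomputable def Delta {I : S → S → Prop} (V : Bnd I → MB I) (n : ℕ) (ξ : Bnd I) : MB I :=
  match iter V n ξ with
  | .inl x => V (subB ξ x)
  | .inr _ => .inr ξ

/-- The length of an element of `M̄`, with `|ξ| = ∞` for `ξ ∈ ∂M`. -/
noncomputable def lenE {I : S → S → Prop} : MB I → ℝ≥0∞
  | .inl x => (len x : ℝ≥0∞)
  | .inr _ => ⊤

/-- `E|V| < ∞`. -/
noncomputable def EVfin {I : S → S → Prop} (P : Measure (Bnd I)) (V : Bnd I → MB I) : Prop :=
  ∫⁻ ξ, lenE (V ξ) ∂P < ⊤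

/-- The AST `V` is exhaustive: it is `ℙ`-a.s. finite and `ℙ`-a.s. `ξ = ⋁ₙ Vₙ(ξ)`
(`ξ` is the least upper bound of its iterates). -/
noncomputable def Exhaustive {I : S → S → Prop} (P : Measure (Bnd I)) (V : Bnd I → MB I) : Prop :=
  (∀ᵐ ξ ∂P, ∃ x : Heap I, V ξ = .inl x) ∧
    ∀ᵐ ξ ∂P, (∀ n : ℕ, mLe (iter V n ξ) (.inr ξ)) ∧
      ∀ ζ : MB I, (∀ n : ℕ, mLe (iter V n ξ) ζ) → mLe (.inr ξ) ζ

/-- `ℙ` is a Bernoulli measure: a probability measure on `(∂M, 𝔉)` that is multiplicative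
and positive on elementary cylinders. -/
noncomputable def IsBernoulli {I : S → S → Prop} (P : Measure (Bnd I)) : Prop :=
  IsProbabilityMeasure P ∧
    (∀ x y : Heap I, P (cyl (x * y)) = P (cyl x) * P (cyl y)) ∧
    ∀ x : Heap I, 0 < P (cyl x)

/-- `ζ` is the greatest lower bound, within the complete lattice `L(ξ)`, of the set
`Hₐ(ξ)` of finite subheaps of `ξ` containing an occurrence of `a`:  this characterizes
the first hitting time of `a`. -/
noncomputable def IsHit {I : S → S → Prop} [DecidableEq S] (a : S) (ξ : Bnd I) (ζ : MB I) :
    Prop :=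
  mLe ζ (.inr ξ) ∧
    (∀ x : Heap I, mLe (.inl x) (.inr ξ) → 0 < occ a x → mLe ζ (.inl x)) ∧
    ∀ η : MB I, mLe η (.inr ξ) →
      (∀ x : Heap I, mLe (.inl x) (.inr ξ) → 0 < occ a x → mLe η (.inl x)) → mLe η ζ

/-- The first hitting time of the piece `a`. -/
noncomputable def hit {I : S → S → Prop} [DecidableEq S] (a : S) (ξ : Bnd I) : MB I :=
  letI := Classical.propDecidable (∃ ζ : MB I, IsHit a ξ ζ)
  if h : ∃ ζ : MB I, IsHit a ξ ζ then h.choose else .inr ξ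

/-- A maximal clique: a maximal element of `(𝒞, ≤)`. -/
noncomputable def IsMaxCl {I : S → S → Prop} (γ : Cl I) : Prop :=
  ∀ δ : Cl I, hLe γ.heap δ.heap → δ.heap = γ.heap

/-- The AST cutting an infinite heap at the first occurrence of a maximal clique. -/
noncomputable def Vmax {I : S → S → Prop} (ξ : Bnd I) : MB I :=
  letI := Classical.propDecidable
  if h : ∃ k : ℕ, IsMaxCl (ξ.1 k) then .inl (ppSeq ξ.1 (Nat.find h + 1)) else .inr ξ

/-- The ergodic mean `⟨φ, x⟩ / |x|` (junk value `0` on infinite heaps). -/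
noncomputable def ratioC {I : S → S → Prop} (φ : S → ℝ) : MB I → ℝ
  | .inl x => pairing φ x / (len x : ℝ)
  | .inr _ => 0

/-- The ratio `φ(x)/|x|` for `φ` defined on heaps (junk value `0` on infinite heaps). -/
noncomputable def ratioH {I : S → S → Prop} (φ : Heap I → ℝ) : MB I → ℝ
  | .inl x => φ x / (len x : ℝ)
  | .inr _ => 0

/-- The set `ℭ` of nonempty cliques. -/
def NCl (I : S → S → Prop) := {γ : Cl I // γ.1.Nonempty}

instance [Fintype S] (I : S → S → Prop) : Finite (Cl I) :=
  inferInstanceAs (Finite {s : Finset S // ∀ a ∈ s, ∀ b ∈ s, a ≠ b → I a b})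

instance [Fintype S] (I : S → S → Prop) : Finite (NCl I) :=
  inferInstanceAs (Finite {γ : Cl I // γ.1.Nonempty})

/-- The valuation `f(x) = ℙ(↑x)` associated with `ℙ`. -/
noncomputable def fval {I : S → S → Prop} (P : Measure (Bnd I)) (x : Heap I) : ℝ :=
  (P (cyl x)).toReal

open Classical in
/-- The Möbius transform `h` of the valuation `f` associated with `ℙ`. -/
noncomputable def mobius {I : S → S → Prop} (P : Measure (Bnd I)) (γ : Cl I) : ℝ :=
  ∑ᶠ γ' : Cl I,
    if hLe γ.heap γ'.heap then (-1 : ℝ) ^ (γ'.1.card - γ.1.card) * fval P γ'.heap else 0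

open Classical in
/-- The normalization `g(γ) = Σ_{γ'∈ℭ, γ→γ'} h(γ')`. -/
noncomputable def gnorm {I : S → S → Prop} (P : Measure (Bnd I)) (γ : Cl I) : ℝ :=
  ∑ᶠ γ' : Cl I, if γ'.1.Nonempty ∧ Move γ γ' then mobius P γ' else 0

open Classical in
/-- The transition matrix of the Markov chain of cliques. -/
noncomputable def Pmat {I : S → S → Prop} (P : Measure (Bnd I)) (γ γ' : Cl I) : ℝ :=
  if Move γ γ' then mobius P γ' / gnorm P γ else 0

/-- `π` is a stationary probability distribution, carried by the nonempty cliques, of the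
Markov chain of cliques. -/
noncomputable def IsStationary {I : S → S → Prop} (P : Measure (Bnd I)) (π : Cl I → ℝ) :
    Prop :=
  (∀ γ : Cl I, 0 ≤ π γ) ∧ (π (emptyCl I) = 0) ∧ (∑ᶠ γ : Cl I, π γ = 1) ∧
    ∀ γ' : Cl I, π γ' = ∑ᶠ γ : Cl I, π γ * Pmat P γ γ'

open Classical in
/-- The nonnegative matrix `B` on `ℭ×ℭ`: `B_{γ,γ'} = f(γ')` if `γ → γ'`, else `0`. -/
noncomputable def Bmat {I : S → S → Prop} (P : Measure (Bnd I)) :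
    Matrix (NCl I) (NCl I) ℝ :=
  fun γ γ' => if Move γ.1 γ'.1 then fval P γ'.1.heap else 0

/-- The spectral radius of `B` (as a complex matrix). -/
noncomputable def specRadB [Fintype S] {I : S → S → Prop} (P : Measure (Bnd I)) : ℝ≥0∞ :=
  letI : Fintype (NCl I) := Fintype.ofFinite _
  letI : DecidableEq (NCl I) := Classical.decEq _
  spectralRadius ℂ ((Bmat P).map (algebraMap ℝ ℂ))

/-- The height `τ(x)` of a heap: the number of cliques in its Cartier–Foata decomposition. -/
noncomputable def height {I : S → S → Prop} (x : Heap I) : ℕ :=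
  sInf {N : ℕ | ∀ n, N ≤ n → cf I x n = emptyCl I}

/-- The ratio `|x|/τ(x)` (junk value `0` on infinite heaps). -/
noncomputable def speedRatio {I : S → S → Prop} : MB I → ℝ
  | .inl x => (len x : ℝ) / (height x : ℝ)
  | .inr _ => 0

/-- `ψ ∘ θ_V` extended by `0` outside the domain of `θ_V`. -/
noncomputable def extShift {I : S → S → Prop} (V : Bnd I → MB I) (ψ : Bnd I → ℝ)
    (η : Bnd I) : ℝ :=
  match V η with
  | .inl _ => ψ (shiftV V η)
  | .inr _ => 0



section AuxMachinery
set_option linter.unusedSectionVars false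
variable {I : S → S → Prop}
-- ===== Part A =====
variable {I : S → S → Prop}

def mkh (I : S → S → Prop) (w : List S) : Heap I := Con.mk' (HeapCon I) (FreeMonoid.ofList w)

theorem mkh_nil : mkh I [] = 1 := rfl

theorem mkh_append (w w' : List S) : mkh I (w ++ w') = mkh I w * mkh I w' := by
  show Con.mk' (HeapCon I) (FreeMonoid.ofList (w ++ w')) = _
  rw [show FreeMonoid.ofList (w ++ w') = FreeMonoid.ofList w * FreeMonoid.ofList w' from rfl,
    map_mul]
  rfl

theorem mkh_cons (c : S) (w : List S) : mkh I (c :: w) = mkh I [c] * mkh I w :=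
  mkh_append [c] w

theorem mkh_eq_iff {w w' : List S} :
    mkh I w = mkh I w' ↔ HeapCon I (FreeMonoid.ofList w) (FreeMonoid.ofList w') := by
  unfold mkh
  rw [Con.coe_mk']
  exact Con.eq _

theorem mkh_surjective (x : Heap I) : ∃ w : List S, mkh I w = x := by
  obtain ⟨w, rfl⟩ := Con.mk'_surjective (c := HeapCon I) x
  exact ⟨FreeMonoid.toList w, rfl⟩

theorem addExt_mul {A : Type} [AddCommMonoid A] (φ : S → A) (x y : Heap I) :
    addExt φ (x * y) = addExt φ x + addExt φ y := by
  unfold addExt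
  erw [map_mul]
  rfl

theorem addExt_one {A : Type} [AddCommMonoid A] (φ : S → A) :
    addExt (I := I) φ 1 = 0 := by
  unfold addExt
  erw [map_one (Con.lift (HeapCon I) _ _)]
  rfl

theorem addExt_single {A : Type} [AddCommMonoid A] (φ : S → A) (c : S) :
    addExt (I := I) φ (mkh I [c]) = φ c := by
  unfold addExt mkh
  erw [Con.lift_mk']
  rfl

theorem addExt_mkh {A : Type} [AddCommMonoid A] (φ : S → A) (w : List S) :
    addExt (I := I) φ (mkh I w) = (w.map φ).sum := by
  induction w with
  | nil => simpa [mkh_nil] using addExt_one (I := I) φ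
  | cons c w ih => rw [mkh_cons, addExt_mul, addExt_single, ih]; simp

theorem len_mul (x y : Heap I) : len (x * y) = len x + len y := addExt_mul _ x y
theorem len_one : len (1 : Heap I) = 0 := addExt_one _
theorem len_mkh (w : List S) : len (mkh I w) = w.length := by
  rw [len, addExt_mkh]; induction w with
  | nil => rfl
  | cons c w ih => simp [ih]; omega

theorem len_eq_zero {x : Heap I} (h : len x = 0) : x = 1 := by
  obtain ⟨w, rfl⟩ := mkh_surjective x
  rw [len_mkh] at h
  rw [List.length_eq_zero_iff.mp h, mkh_nil]

variable [DecidableEq S]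

theorem occ_mul (a : S) (x y : Heap I) : occ a (x * y) = occ a x + occ a y := addExt_mul _ x y
theorem occ_one (a : S) : occ a (1 : Heap I) = 0 := addExt_one _
theorem occ_mkh (a : S) (w : List S) : occ a (mkh I w) = w.count a := by
  rw [occ, addExt_mkh]
  induction w with
  | nil => rfl
  | cons c w ih =>
    rw [List.map_cons, List.sum_cons, ih, List.count_cons]
    by_cases h : c = a <;> simp [h, Nat.add_comm]

theorem occ_single (a c : S) : occ a (mkh I [c]) = if c = a then 1 else 0 := by
  rw [occ_mkh]; by_cases h : c = a <;> simp [h, List.count_cons, List.count_nil]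

-- hLe basics
theorem hLe_refl (x : Heap I) : hLe x x := ⟨1, (mul_one x).symm⟩
theorem hLe_trans {x y z : Heap I} (h : hLe x y) (h' : hLe y z) : hLe x z := by
  obtain ⟨u, rfl⟩ := h; obtain ⟨v, rfl⟩ := h'; exact ⟨u * v, mul_assoc _ _ _⟩
theorem one_hLe (x : Heap I) : hLe 1 x := ⟨x, (one_mul x).symm⟩
theorem hLe_mul_left {x y : Heap I} (c : Heap I) (h : hLe x y) : hLe (c * x) (c * y) := by
  obtain ⟨u, rfl⟩ := h; exact ⟨u, (mul_assoc _ _ _).symm⟩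
theorem hLe_mul_right (x y : Heap I) : hLe x (x * y) := ⟨y, rfl⟩
theorem len_le_of_hLe {x y : Heap I} (h : hLe x y) : len x ≤ len y := by
  obtain ⟨u, rfl⟩ := h; rw [len_mul]; omega
theorem occ_le_of_hLe {x y : Heap I} (a : S) (h : hLe x y) : occ a x ≤ occ a y := by
  obtain ⟨u, rfl⟩ := h; rw [occ_mul]; omega
theorem hLe_antisymm {x y : Heap I} (h : hLe x y) (h' : hLe y x) : x = y := by
  obtain ⟨u, rfl⟩ := h
  obtain ⟨v, hv⟩ := h'
  have : len u = 0 := by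
    have := congrArg len hv
    rw [len_mul, len_mul] at this
    omega
  rw [len_eq_zero this, mul_one]
theorem hLe_one {x : Heap I} (h : hLe x 1) : x = 1 := hLe_antisymm h (one_hLe x)

theorem ne_one_of_occ_pos {a : S} {x : Heap I} (h : 0 < occ a x) : x ≠ 1 := by
  intro hx; rw [hx, occ_one] at h; omega


-- ===== Part B : erase invariance and cancellation =====
section PartB
variable (hirr : ∀ a : S, ¬ I a a)
include hirr

omit hirr in
theorem count_eq_of_heapCon {w w' : FreeMonoid S} (h : HeapCon I w w') (a : S) :
    (FreeMonoid.toList w).count a = (FreeMonoid.toList w').count a := by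
  have : mkh I (FreeMonoid.toList w) = mkh I (FreeMonoid.toList w') := mkh_eq_iff.mpr h
  have := congrArg (occ a) this
  rwa [occ_mkh, occ_mkh] at this

theorem erase_rel (c : S) {w w' : FreeMonoid S} (h : HeapCon I w w') :
    HeapCon I (FreeMonoid.ofList ((FreeMonoid.toList w).erase c))
      (FreeMonoid.ofList ((FreeMonoid.toList w').erase c)) := by
  induction h with
  | of x y hxy =>
    obtain ⟨a, b, hab, rfl, rfl⟩ := hxy
    have hne : a ≠ b := by rintro rfl; exact hirr a hab
    show HeapCon I (FreeMonoid.ofList ([a, b].erase c)) (FreeMonoid.ofList ([b, a].erase c))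
    by_cases hca : c = a
    · subst hca
      rw [List.erase_cons_head, List.erase_cons_tail (by simp [hne.symm]),
        List.erase_cons_head]
      exact (HeapCon I).refl _
    · by_cases hcb : c = b
      · subst hcb
        rw [List.erase_cons_tail (by simp [Ne.symm hca]), List.erase_cons_head,
          List.erase_cons_head]
        exact (HeapCon I).refl _
      · rw [List.erase_cons_tail (by simp [Ne.symm hca]),
          List.erase_cons_tail (by simp [Ne.symm hcb]),
          List.erase_of_not_mem (by simp [hca, hcb]),
          List.erase_of_not_mem (by simp [hca, hcb])]
        exact ConGen.Rel.of _ _ ⟨a, b, hab, rfl, rfl⟩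
  | refl x => exact (HeapCon I).refl _
  | symm _ ih => exact (HeapCon I).symm ih
  | trans _ _ ih1 ih2 => exact (HeapCon I).trans ih1 ih2
  | @mul w₁ w₂ v₁ v₂ h1 h2 ih1 ih2 =>
    have hcount := count_eq_of_heapCon h1 c
    by_cases hc : c ∈ FreeMonoid.toList w₁
    · have hc' : c ∈ FreeMonoid.toList w₂ := by
        rw [← List.count_pos_iff] at hc ⊢
        omega
      show HeapCon I (FreeMonoid.ofList ((FreeMonoid.toList w₁ ++ FreeMonoid.toList v₁).erase c))
        (FreeMonoid.ofList ((FreeMonoid.toList w₂ ++ FreeMonoid.toList v₂).erase c))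
      rw [List.erase_append_left _ hc, List.erase_append_left _ hc']
      exact (HeapCon I).mul ih1 h2
    · have hc' : c ∉ FreeMonoid.toList w₂ := by
        rw [← List.count_pos_iff] at hc ⊢
        omega
      show HeapCon I (FreeMonoid.ofList ((FreeMonoid.toList w₁ ++ FreeMonoid.toList v₁).erase c))
        (FreeMonoid.ofList ((FreeMonoid.toList w₂ ++ FreeMonoid.toList v₂).erase c))
      rw [List.erase_append_right _ hc, List.erase_append_right _ hc']
      exact (HeapCon I).mul h1 ih2

theorem cancel_single {c : S} {y z : Heap I} (h : mkh I [c] * y = mkh I [c] * z) : y = z := by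
  obtain ⟨v, rfl⟩ := mkh_surjective y
  obtain ⟨w, rfl⟩ := mkh_surjective z
  rw [← mkh_cons, ← mkh_cons, mkh_eq_iff] at h
  have := erase_rel hirr c h
  simp only [FreeMonoid.toList_ofList, List.erase_cons_head] at this
  exact mkh_eq_iff.mpr (by simpa using this)

theorem heap_cancel_left {x y z : Heap I} (h : x * y = x * z) : y = z := by
  obtain ⟨w, rfl⟩ := mkh_surjective x
  induction w with
  | nil => simpa [mkh_nil] using h
  | cons c w ih =>
    rw [mkh_cons, mul_assoc, mul_assoc] at h
    exact ih (cancel_single hirr h)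

theorem sub_unique {x y z : Heap I} (h : x * y = x * z) : y = z := heap_cancel_left hirr h

theorem hLe_cancel {c x y : Heap I} (h : hLe (c * x) (c * y)) : hLe x y := by
  obtain ⟨u, hu⟩ := h
  exact ⟨u, heap_cancel_left hirr (by rw [hu, mul_assoc])⟩

end PartB

-- ===== Part C : projections =====
section PartC

/-- State monoid tracking first occurrence of a distinguished letter. -/
structure FF where
  found : Bool
  clean : Bool
deriving DecidableEq

instance : Fintype FF :=
  ⟨⟨{⟨false, false⟩, ⟨false, true⟩, ⟨true, false⟩, ⟨true, true⟩}, by decide⟩, by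
    rintro ⟨⟨⟩, ⟨⟩⟩ <;> decide⟩

instance : Monoid FF where
  one := ⟨false, true⟩
  mul x y := if x.found then x else ⟨y.found, x.clean && y.clean⟩
  mul_assoc := by decide
  one_mul := by decide
  mul_one := by decide

theorem FF.tt_mul (b : Bool) (y : FF) : (⟨true, b⟩ : FF) * y = ⟨true, b⟩ := rfl
theorem FF.ff_mul (b : Bool) (y : FF) : (⟨false, b⟩ : FF) * y = ⟨y.found, b && y.clean⟩ := rfl
theorem FF.one_def : (1 : FF) = ⟨false, true⟩ := rfl

open Classical in
noncomputable def phiL (I : S → S → Prop) (c d : S) : FF :=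
  if d = c then ⟨true, true⟩ else ⟨false, if I d c ∨ I c d then true else false⟩

theorem phiL_self (c : S) : phiL I c c = ⟨true, true⟩ := by unfold phiL; rw [if_pos rfl]

theorem phiL_clean {c d : S} (h : d ≠ c) (hI : I d c ∨ I c d) :
    phiL I c d = ⟨false, true⟩ := by unfold phiL; rw [if_neg h, if_pos hI]

theorem phiL_dirty {c d : S} (h : d ≠ c) (hI : ¬ (I d c ∨ I c d)) :
    phiL I c d = ⟨false, false⟩ := by unfold phiL; rw [if_neg h, if_neg hI]

theorem phiL_ne (c : S) {d : S} (h : d ≠ c) : ∃ b : Bool, phiL I c d = ⟨false, b⟩ := by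
  by_cases hI : I d c ∨ I c d
  · exact ⟨true, phiL_clean h hI⟩
  · exact ⟨false, phiL_dirty h hI⟩

theorem phiL_indep {c d : S} (h : d ≠ c) {b : Bool} (hb : phiL I c d = ⟨false, b⟩)
    (htrue : b = true) : I d c ∨ I c d := by
  by_contra hI
  rw [phiL_dirty h hI, FF.mk.injEq, htrue] at hb
  simp at hb

noncomputable def phiHom (I : S → S → Prop) (c : S) : Heap I →* FF :=
  Con.lift (HeapCon I) (FreeMonoid.lift (phiL I c)) (Con.conGen_le.2 (by
    rintro w₁ w₂ ⟨a, b, hab, rfl, rfl⟩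
    refine (Con.ker_rel _).mpr ?_
    rw [map_mul, map_mul]
    show phiL I c a * phiL I c b = phiL I c b * phiL I c a
    by_cases hac : a = c
    · subst hac
      by_cases hbc : b = a
      · subst hbc; rfl
      · rw [phiL_self, phiL_clean hbc (Or.inr hab), FF.tt_mul, FF.ff_mul]; rfl
    · by_cases hbc : b = c
      · subst hbc
        rw [phiL_self, phiL_clean hac (Or.inl hab), FF.tt_mul, FF.ff_mul]; rfl
      · obtain ⟨x, hx⟩ := phiL_ne (I := I) c hac
        obtain ⟨y, hy⟩ := phiL_ne (I := I) c hbc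
        rw [hx, hy, FF.ff_mul, FF.ff_mul]
        simp [Bool.and_comm]))

theorem phi_mkh_single (c d : S) : phiHom I c (mkh I [d]) = phiL I c d := by
  have h1 : phiHom I c (mkh I [d]) = FreeMonoid.lift (phiL I c) (FreeMonoid.ofList [d]) :=
    Con.lift_mk' _ _
  rw [h1, FreeMonoid.lift_apply]
  simp

theorem phi_mkh_cons (c d : S) (w : List S) :
    phiHom I c (mkh I (d :: w)) = phiL I c d * phiHom I c (mkh I w) := by
  rw [mkh_cons, map_mul, phi_mkh_single]

theorem phi_one (c : S) : phiHom I c (1 : Heap I) = ⟨false, true⟩ := map_one _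

theorem phi_found (c : S) (x : Heap I) : (phiHom I c x).found = true ↔ 0 < occ c x := by
  obtain ⟨w, rfl⟩ := mkh_surjective x
  rw [occ_mkh]
  induction w with
  | nil => rw [mkh_nil, phi_one]; simp
  | cons d w ih =>
    rw [phi_mkh_cons, List.count_cons]
    by_cases hdc : d = c
    · subst hdc; rw [phiL_self, FF.tt_mul]; simp
    · obtain ⟨x, hx⟩ := phiL_ne (I := I) c hdc
      rw [hx, FF.ff_mul]
      simpa [hdc] using ih

theorem swap_mkh {c d : S} (h : I c d) (r : List S) :
    mkh I (c :: d :: r) = mkh I (d :: c :: r) := by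
  refine mkh_eq_iff.mpr ?_
  rw [show FreeMonoid.ofList (c :: d :: r)
      = (FreeMonoid.of c * FreeMonoid.of d) * FreeMonoid.ofList r from rfl,
    show FreeMonoid.ofList (d :: c :: r)
      = (FreeMonoid.of d * FreeMonoid.of c) * FreeMonoid.ofList r from rfl]
  exact (HeapCon I).mul (ConGen.Rel.of _ _ ⟨c, d, h, rfl, rfl⟩) ((HeapCon I).refl _)

theorem swap_mkh' {c d : S} (h : I c d ∨ I d c) (r : List S) :
    mkh I (c :: d :: r) = mkh I (d :: c :: r) := by
  rcases h with h | h
  · exact swap_mkh h r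
  · exact (swap_mkh h r).symm

theorem phi_div {c : S} {x : Heap I} :
    phiHom I c x = ⟨true, true⟩ ↔ hLe (mkh I [c]) x := by
  constructor
  · intro h
    obtain ⟨w, rfl⟩ := mkh_surjective x
    suffices hs : mkh I w = mkh I (c :: w.erase c) by
      rw [hs]
      exact ⟨mkh I (w.erase c), mkh_cons c (w.erase c)⟩
    induction w with
    | nil => rw [mkh_nil, phi_one] at h; exact absurd (congrArg FF.found h) (by simp)
    | cons d w ih =>
      by_cases hdc : d = c
      · subst hdc; rw [List.erase_cons_head]
      · rw [phi_mkh_cons] at h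
        obtain ⟨x, hx⟩ := phiL_ne (I := I) c hdc
        rw [hx, FF.ff_mul, FF.mk.injEq] at h
        obtain ⟨h1, h2⟩ := h
        rcases Bool.and_eq_true_iff.mp h2 with ⟨hxb, hcl⟩
        have hIdc : I d c ∨ I c d := phiL_indep hdc hx hxb
        have hw : mkh I w = mkh I (c :: w.erase c) := by
          apply ih
          have : phiHom I c (mkh I w) = ⟨(phiHom I c (mkh I w)).found,
              (phiHom I c (mkh I w)).clean⟩ := rfl
          rw [this, h1, hcl]
        rw [List.erase_cons_tail (by simp [hdc])]
        calc mkh I (d :: w) = mkh I [d] * mkh I w := mkh_cons d w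
          _ = mkh I [d] * mkh I (c :: w.erase c) := by rw [hw]
          _ = mkh I (d :: c :: w.erase c) := (mkh_cons _ _).symm
          _ = mkh I (c :: d :: w.erase c) := swap_mkh' hIdc _
  · rintro ⟨y, rfl⟩
    rw [map_mul, phi_mkh_single, phiL_self, FF.tt_mul]

theorem phi_clean_unfound {c : S} {x : Heap I} (h : phiHom I c x = ⟨false, true⟩) :
    ∀ d, 0 < occ d x → I d c ∨ I c d := by
  obtain ⟨w, rfl⟩ := mkh_surjective x
  induction w with
  | nil => intro d hd; rw [mkh_nil, occ_one] at hd; omega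
  | cons e w ih =>
    rw [phi_mkh_cons] at h
    by_cases hec : e = c
    · subst hec
      rw [phiL_self, FF.tt_mul] at h
      exact absurd (congrArg FF.found h) (by simp)
    · obtain ⟨x, hx⟩ := phiL_ne (I := I) c hec
      rw [hx, FF.ff_mul, FF.mk.injEq] at h
      obtain ⟨h1, h2⟩ := h
      rcases Bool.and_eq_true_iff.mp h2 with ⟨hxb, hcl⟩
      have hIe : I e c ∨ I c e := phiL_indep hec hx hxb
      intro d hd
      rw [occ_mkh, List.count_cons] at hd
      by_cases hde : d = e
      · subst hde; exact hIe
      · refine ih ?_ d ?_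
        · have : phiHom I c (mkh I w) = ⟨(phiHom I c (mkh I w)).found,
              (phiHom I c (mkh I w)).clean⟩ := rfl
          rw [this, h1, hcl]
        · have hde' : ¬ e = d := fun h => hde h.symm
          rw [occ_mkh, List.count_pos_iff]
          simp [hde, hde'] at hd
          exact hd

theorem phi_not_found {c : S} {x : Heap I} (h : occ c x = 0) :
    ∃ b : Bool, phiHom I c x = ⟨false, b⟩ := by
  have := phi_found (I := I) c x
  rcases hb : phiHom I c x with ⟨f, b⟩
  cases f
  · exact ⟨b, rfl⟩
  · rw [hb] at this; simp at this; omega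

end PartC

-- ===== Part D : commutation, pair projection, key letter lemmas =====
section PartD

theorem FF.eta (x : FF) : x = ⟨x.found, x.clean⟩ := rfl

theorem occ_pos_head (c : S) (w : List S) : 0 < occ c (mkh I (c :: w)) := by
  rw [occ_mkh, List.count_cons]; simp

theorem occ_tail_le (d c : S) (w : List S) : occ d (mkh I w) ≤ occ d (mkh I (c :: w)) := by
  rw [mkh_cons, occ_mul]; omega

theorem comm_single {c : S} {z : Heap I} (hc : ∀ d, 0 < occ d z → I c d) :
    mkh I [c] * z = z * mkh I [c] := by
  obtain ⟨w, rfl⟩ := mkh_surjective z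
  induction w with
  | nil => rw [mkh_nil, one_mul, mul_one]
  | cons d w ih =>
    have hcd : I c d := hc d (occ_pos_head d w)
    calc mkh I [c] * mkh I (d :: w) = mkh I (c :: d :: w) := (mkh_cons _ _).symm
      _ = mkh I (d :: c :: w) := swap_mkh hcd w
      _ = mkh I [d] * (mkh I [c] * mkh I w) := by rw [mkh_cons d (c :: w), mkh_cons c w]
      _ = mkh I [d] * (mkh I w * mkh I [c]) := by
            rw [ih (fun d' hd' => hc d' (lt_of_lt_of_le hd' (occ_tail_le d' d w)))]
      _ = mkh I (d :: w) * mkh I [c] := by rw [mkh_cons d w, mul_assoc]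

theorem comm_heap {P Q : Heap I} (h : ∀ d e, 0 < occ d P → 0 < occ e Q → I d e) :
    P * Q = Q * P := by
  obtain ⟨w, rfl⟩ := mkh_surjective P
  induction w with
  | nil => rw [mkh_nil, one_mul, mul_one]
  | cons c w ih =>
    have h1 : ∀ e, 0 < occ e Q → I c e := fun e he => h c e (occ_pos_head c w) he
    have h2 : ∀ d e, 0 < occ d (mkh I w) → 0 < occ e Q → I d e := fun d e hd he =>
      h d e (lt_of_lt_of_le hd (occ_tail_le d c w)) he
    calc mkh I (c :: w) * Q = mkh I [c] * (mkh I w * Q) := by rw [mkh_cons, mul_assoc]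
      _ = mkh I [c] * (Q * mkh I w) := by rw [ih h2]
      _ = (mkh I [c] * Q) * mkh I w := (mul_assoc _ _ _).symm
      _ = (Q * mkh I [c]) * mkh I w := by rw [comm_single h1]
      _ = Q * mkh I (c :: w) := by rw [mul_assoc, ← mkh_cons]

def keepP [DecidableEq S] (d a e : S) : Prop := e = d ∨ e = a

instance [DecidableEq S] (d a e : S) : Decidable (keepP d a e) := by
  unfold keepP; infer_instance

noncomputable def piHom (I : S → S → Prop) [DecidableEq S] (d a : S)
    (hp : ¬ I d a ∧ ¬ I a d) : Heap I →* FreeMonoid S :=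
  Con.lift (HeapCon I)
    (FreeMonoid.lift (fun e => if keepP d a e then FreeMonoid.of e else 1))
    (Con.conGen_le.2 (by
      rintro w₁ w₂ ⟨x, y, hxy, rfl, rfl⟩
      refine (Con.ker_rel _).mpr ?_
      rw [map_mul, map_mul]
      show (if keepP d a x then FreeMonoid.of x else 1) * (if keepP d a y then FreeMonoid.of y else 1)
        = (if keepP d a y then FreeMonoid.of y else 1) * (if keepP d a x then FreeMonoid.of x else 1)
      by_cases hxy' : x = y
      · subst hxy'; rfl
      · by_cases hx : keepP d a x
        · by_cases hy : keepP d a y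
          · exfalso
            rcases hx with rfl | rfl <;> rcases hy with rfl | rfl
            · exact hxy' rfl
            · exact hp.1 hxy
            · exact hp.2 hxy
            · exact hxy' rfl
          · rw [if_pos hx, if_neg hy, mul_one, one_mul]
        · rw [if_neg hx]
          rw [mul_one, one_mul]))

theorem pi_mkh [DecidableEq S] (d a : S) (hp : ¬ I d a ∧ ¬ I a d) (w : List S) :
    piHom I d a hp (mkh I w) = FreeMonoid.ofList (w.filter (fun e => decide (keepP d a e))) := by
  induction w with
  | nil => exact map_one _
  | cons e w ih =>
    rw [mkh_cons, map_mul, ih]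
    have hsingle : piHom I d a hp (mkh I [e])
        = (if keepP d a e then FreeMonoid.of e else 1) := by
      have h1 : piHom I d a hp (mkh I [e]) = FreeMonoid.lift
          (fun e => if keepP d a e then FreeMonoid.of e else 1) (FreeMonoid.ofList [e]) :=
        Con.lift_mk' _ _
      rw [h1, FreeMonoid.lift_apply]
      simp
    rw [hsingle]
    by_cases he : keepP d a e
    · rw [if_pos he, List.filter_cons, if_pos (by simpa using he)]
      rfl
    · rw [if_neg he, List.filter_cons, if_neg (by simpa using he), one_mul]

theorem split_first {a : S} {w : List S} (h : a ∈ w) :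
    ∃ w₁ w₂, w = w₁ ++ a :: w₂ ∧ a ∉ w₁ := by
  induction w with
  | nil => cases h
  | cons e w ih =>
    by_cases hea : e = a
    · subst hea; exact ⟨[], w, rfl, by simp⟩
    · have h' : a ∈ w := by
        rcases List.mem_cons.mp h with h | h
        · exact absurd h.symm hea
        · exact h
      obtain ⟨w₁, w₂, rfl, h1⟩ := ih h'
      exact ⟨e :: w₁, w₂, rfl, by simp [h1]; exact fun hh => hea hh.symm⟩

theorem wbad {a : S} {w : List S} (h : phiHom I a (mkh I w) = ⟨true, false⟩) :
    ∃ w₁ d w₂ w₃, w = w₁ ++ d :: (w₂ ++ a :: w₃) ∧ a ∉ w₁ ∧ d ≠ a ∧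
      ¬ (I d a ∨ I a d) ∧ a ∉ w₂ := by
  induction w with
  | nil =>
    rw [mkh_nil, phi_one] at h
    exact absurd (congrArg FF.found h) (by simp)
  | cons e w ih =>
    rw [phi_mkh_cons] at h
    by_cases hea : e = a
    · subst hea
      rw [phiL_self, FF.tt_mul] at h
      exact absurd (congrArg FF.clean h) (by simp)
    · obtain ⟨x, hx⟩ := phiL_ne (I := I) a hea
      rw [hx, FF.ff_mul, FF.mk.injEq] at h
      obtain ⟨h1, h2⟩ := h
      by_cases hIe : I e a ∨ I a e
      · -- e is clean: x = true, so tail is dirty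
        have hxval : x = true := by
          rw [phiL_clean hea hIe, FF.mk.injEq] at hx
          exact hx.2.symm
        subst hxval
        rw [Bool.true_and] at h2
        have hphiw : phiHom I a (mkh I w) = ⟨true, false⟩ := by
          rw [FF.eta (phiHom I a (mkh I w)), h1, h2]
        obtain ⟨w₁, d, w₂, w₃, heq, ha1, hda, hIda, ha2⟩ := ih hphiw
        refine ⟨e :: w₁, d, w₂, w₃, by rw [heq]; rfl, ?_, hda, hIda, ha2⟩
        simp [ha1]
        exact fun h => hea h.symm
      · -- e itself is the dirty letter
        have haw : a ∈ w := by
          rw [← List.count_pos_iff, ← occ_mkh]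
          exact (phi_found a (mkh I w)).mp h1
        obtain ⟨w₂, w₃, heq, ha2⟩ := split_first haw
        exact ⟨[], e, w₂, w₃, by rw [heq]; rfl, by simp, hea, hIe, ha2⟩

theorem firsta {a : S} {u z : Heap I} (ha : hLe (mkh I [a]) u) (hz : hLe z u)
    (hocc : 0 < occ a z) : hLe (mkh I [a]) z := by
  by_contra hno
  have hfound : (phiHom I a z).found = true := (phi_found a z).mpr hocc
  have hdirty : phiHom I a z = ⟨true, false⟩ := by
    rcases hb : phiHom I a z with ⟨f, b⟩
    rw [hb] at hfound
    have hf : f = true := hfound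
    subst hf
    cases b
    · rfl
    · exact absurd (phi_div.mp hb) hno
  obtain ⟨w, rfl⟩ := mkh_surjective z
  obtain ⟨w₁, d, w₂, w₃, heq, ha1, hda, hIda, ha2⟩ := wbad hdirty
  have hp : ¬ I d a ∧ ¬ I a d := not_or.mp hIda
  obtain ⟨u', hu'⟩ := ha
  obtain ⟨s, hs⟩ := hz
  obtain ⟨ws, rfl⟩ := mkh_surjective s
  -- compute the pair projection of u in two ways
  have E1 : piHom I d a hp u = FreeMonoid.of a * piHom I d a hp u' := by
    rw [hu', map_mul]
    congr 1
    rw [pi_mkh]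
    have hfa : List.filter (fun e => decide (keepP d a e)) [a] = [a] := by
      simp [keepP]
    rw [hfa]
    rfl
  have E2 : piHom I d a hp u
      = piHom I d a hp (mkh I w) * piHom I d a hp (mkh I ws) := by
    rw [hs, map_mul]
  rw [pi_mkh, pi_mkh] at E2
  subst heq
  -- lists
  have hL : FreeMonoid.toList (piHom I d a hp u)
      = a :: FreeMonoid.toList (piHom I d a hp u') := by
    rw [E1]; rfl
  have hkd : decide (keepP d a d) = true := by simp [keepP]
  have hka : decide (keepP d a a) = true := by simp [keepP]
  have hR : FreeMonoid.toList (piHom I d a hp u)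
      = ((w₁.filter (fun e => decide (keepP d a e))) ++
          d :: ((w₂ ++ a :: w₃).filter (fun e => decide (keepP d a e)))) ++
        (ws.filter (fun e => decide (keepP d a e))) := by
    rw [E2]
    show ((w₁ ++ d :: (w₂ ++ a :: w₃)).filter (fun e => decide (keepP d a e))) ++ _ = _
    rw [List.filter_append, List.filter_cons, if_pos hkd]
    rfl
  rw [hL] at hR
  -- derive contradiction: head of RHS is d-ish, head of LHS is a
  rcases hF : w₁.filter (fun e => decide (keepP d a e)) with _ | ⟨f, F'⟩
  · rw [hF] at hR
    simp only [List.nil_append, List.cons_append] at hR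
    injection hR with h1 _
    exact hda h1.symm
  · rw [hF] at hR
    simp only [List.cons_append] at hR
    injection hR with h1 _
    have hfmem : f ∈ w₁.filter (fun e => decide (keepP d a e)) := by rw [hF]; simp
    rw [List.mem_filter] at hfmem
    have : f = d ∨ f = a := of_decide_eq_true hfmem.2
    rcases this with rfl | rfl
    · exact hda h1.symm
    · exact ha1 hfmem.1

end PartD

-- ===== Part E : side, dropmin, meet, key =====
section PartE
variable (hsymm : ∀ a b : S, I a b → I b a) (hirr : ∀ a : S, ¬ I a a)
include hsymm hirr

theorem side {c : S} {u z u₀ : Heap I} (hc : u = mkh I [c] * u₀) (hz : hLe z u)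
    (hnc : ¬ hLe (mkh I [c]) z) :
    (∀ d, 0 < occ d z → I d c) ∧ hLe z u₀ := by
  obtain ⟨s, hu⟩ := hz
  have hphi : phiHom I c u = ⟨true, true⟩ := phi_div.mpr ⟨u₀, hc⟩
  rw [hu, map_mul] at hphi
  rcases hZ : phiHom I c z with ⟨fz, bz⟩
  rw [hZ] at hphi
  cases fz with
  | true =>
    rw [FF.tt_mul] at hphi
    exact absurd (phi_div.mp (hZ.trans hphi)) hnc
  | false =>
    rw [FF.ff_mul, FF.mk.injEq] at hphi
    obtain ⟨hf, hb⟩ := hphi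
    rcases Bool.and_eq_true_iff.mp hb with ⟨hbz, hcl⟩
    subst hbz
    have hind : ∀ d, 0 < occ d z → I d c := by
      intro d hd
      rcases phi_clean_unfound hZ d hd with h | h
      · exact h
      · exact hsymm c d h
    have hsTT : phiHom I c s = ⟨true, true⟩ := by
      rw [FF.eta (phiHom I c s), hf, hcl]
    obtain ⟨s', hs'⟩ := phi_div.mp hsTT
    have hcomm : mkh I [c] * z = z * mkh I [c] :=
      comm_single (fun d hd => hsymm d c (hind d hd))
    have hkey : mkh I [c] * u₀ = mkh I [c] * (z * s') := by
      rw [← hc, hu, hs']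
      calc z * (mkh I [c] * s') = (z * mkh I [c]) * s' := (mul_assoc _ _ _).symm
        _ = (mkh I [c] * z) * s' := by rw [hcomm]
        _ = mkh I [c] * (z * s') := mul_assoc _ _ _
    exact ⟨hind, ⟨s', heap_cancel_left hirr hkey⟩⟩

omit hirr in
theorem dropmin {a b : S} {u u₀ : Heap I} (hne : b ≠ a) (hb : hLe (mkh I [b]) u)
    (hu : u = mkh I [a] * u₀) : I a b ∧ hLe (mkh I [b]) u₀ := by
  have hphi : phiHom I b u = ⟨true, true⟩ := phi_div.mpr hb
  rw [hu, map_mul, phi_mkh_single] at hphi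
  have hab : a ≠ b := fun h => hne h.symm
  obtain ⟨x, hx⟩ := phiL_ne (I := I) b hab
  rw [hx, FF.ff_mul, FF.mk.injEq] at hphi
  obtain ⟨hf, hb2⟩ := hphi
  rcases Bool.and_eq_true_iff.mp hb2 with ⟨hxv, hcl⟩
  have hI : I a b ∨ I b a := phiL_indep hab hx hxv
  have hI' : I a b := by
    rcases hI with h | h
    · exact h
    · exact hsymm b a h
  refine ⟨hI', phi_div.mp ?_⟩
  rw [FF.eta (phiHom I b u₀), hf, hcl]

theorem meeta {a : S} : ∀ n (u y z : Heap I), len u ≤ n → hLe y u → hLe z u →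
    0 < occ a y → 0 < occ a z → ∃ w, hLe w y ∧ hLe w z ∧ 0 < occ a w := by
  intro n
  induction n with
  | zero =>
    intro u y z hn hy hz hay _
    have hu1 : u = 1 := len_eq_zero (by omega)
    have hy1 : y = 1 := by
      subst hu1
      exact hLe_one hy
    rw [hy1, occ_one] at hay
    omega
  | succ n ih =>
    intro u y z hn hy hz hay haz
    obtain ⟨wy, hwy⟩ := mkh_surjective y
    match wy, hwy with
    | [], hwy =>
      rw [← hwy, mkh_nil, occ_one] at hay
      omega
    | c :: w, hwy =>
    have hy₁ : y = mkh I [c] * mkh I w := by rw [← hwy, mkh_cons]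
    have hcy : hLe (mkh I [c]) y := ⟨mkh I w, hy₁⟩
    have hcu : hLe (mkh I [c]) u := hLe_trans hcy hy
    obtain ⟨u₀, hu₀⟩ := hcu
    have hlenu : len u₀ ≤ n := by
      have h := congrArg len hu₀
      rw [len_mul, len_mkh] at h
      simp at h
      omega
    have hwyu : hLe (mkh I w) u₀ := by
      obtain ⟨r, hr⟩ := hy
      refine ⟨r, heap_cancel_left hirr (x := mkh I [c]) ?_⟩
      rw [← hu₀, hr, hy₁, mul_assoc]
    by_cases hcz : hLe (mkh I [c]) z
    · by_cases hca : c = a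
      · subst hca
        refine ⟨mkh I [c], hcy, hcz, ?_⟩
        rw [occ_mkh]
        simp
      · obtain ⟨z₁, hz₁⟩ := hcz
        have hz₁u : hLe z₁ u₀ := by
          obtain ⟨s, hs⟩ := hz
          refine ⟨s, heap_cancel_left hirr (x := mkh I [c]) ?_⟩
          rw [← hu₀, hs, hz₁, mul_assoc]
        have hoccw : 0 < occ a (mkh I w) := by
          rw [hy₁, occ_mul, occ_single, if_neg hca] at hay
          omega
        have hoccz₁ : 0 < occ a z₁ := by
          rw [hz₁, occ_mul, occ_single, if_neg hca] at haz
          omega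
        obtain ⟨w', h1, h2, h3⟩ := ih u₀ (mkh I w) z₁ hlenu hwyu hz₁u hoccw hoccz₁
        refine ⟨mkh I [c] * w', ?_, ?_, ?_⟩
        · rw [hy₁]; exact hLe_mul_left _ h1
        · rw [hz₁]; exact hLe_mul_left _ h2
        · rw [occ_mul]; omega
    · have hca : c ≠ a := by
        rintro rfl
        exact hcz (firsta ⟨u₀, hu₀⟩ hz haz)
      obtain ⟨hind, hzu₀⟩ := side hsymm hirr hu₀ hz hcz
      have hoccw : 0 < occ a (mkh I w) := by
        rw [hy₁, occ_mul, occ_single, if_neg hca] at hay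
        omega
      obtain ⟨w', h1, h2, h3⟩ := ih u₀ (mkh I w) z hlenu hwyu hzu₀ hoccw haz
      have hcomm : mkh I [c] * w' = w' * mkh I [c] :=
        comm_single (fun d hd => hsymm d c (hind d (lt_of_lt_of_le hd (occ_le_of_hLe d h2))))
      obtain ⟨t, ht⟩ := h1
      refine ⟨w', ⟨mkh I [c] * t, ?_⟩, h2, h3⟩
      rw [hy₁, ht, ← mul_assoc, hcomm, mul_assoc]

theorem key {a : S} {u : Heap I} (hu : 0 < occ a u) :
    ∃ x₀ : Heap I, hLe x₀ u ∧ 0 < occ a x₀ ∧ ∀ z, hLe z u → 0 < occ a z → hLe x₀ z := by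
  classical
  set P : Set ℕ := {m : ℕ | ∃ z : Heap I, hLe z u ∧ 0 < occ a z ∧ len z = m} with hP
  have hne : P.Nonempty := ⟨len u, u, hLe_refl u, hu, rfl⟩
  obtain ⟨x₀, hx₀u, hx₀a, hx₀len⟩ := Nat.sInf_mem hne
  refine ⟨x₀, hx₀u, hx₀a, ?_⟩
  intro z hz hza
  obtain ⟨w, hw1, hw2, hw3⟩ := meeta hsymm hirr (len u) u x₀ z le_rfl hx₀u hz hx₀a hza
  have hwP : len w ∈ P := ⟨w, hLe_trans hw1 hx₀u, hw3, rfl⟩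
  have hle : sInf P ≤ len w := Nat.sInf_le hwP
  obtain ⟨t, ht⟩ := hw1
  have hlt : len t = 0 := by
    have h := congrArg len ht
    rw [len_mul] at h
    have h2 : len x₀ ≤ len w := le_trans (le_of_eq hx₀len) hle
    omega
  rw [len_eq_zero hlt, mul_one] at ht
  rw [ht]
  exact hw2

end PartE


end AuxMachinery







section AuxCF
set_option linter.unusedSectionVars false
variable {I : S → S → Prop} [DecidableEq S]

-- clique lemmas
theorem emptyCl_heap : (emptyCl I).heap = 1 := by
  unfold Cl.heap emptyCl
  exact Finset.noncommProd_empty _ _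

theorem addExt_clique {A : Type} [AddCommMonoid A] (φ : S → A) (γ : Cl I) :
    addExt φ γ.heap = ∑ c ∈ γ.1, φ c := by
  unfold addExt Cl.heap
  erw [Finset.map_noncommProd, Finset.noncommProd_eq_prod, toAdd_prod]
  refine Finset.sum_congr rfl fun c _ => ?_
  erw [Con.lift_mk']
  rfl

theorem occ_clique (d : S) (γ : Cl I) : occ d γ.heap = if d ∈ γ.1 then 1 else 0 := by
  rw [occ, addExt_clique]
  exact Finset.sum_ite_eq' γ.1 d (fun _ => 1)

theorem len_clique (γ : Cl I) : len γ.heap = γ.1.card := by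
  rw [len, addExt_clique]
  simp

theorem mem_clique_hLe {c : S} {γ : Cl I} (hc : c ∈ γ.1) : hLe (mkh I [c]) γ.heap := by
  unfold Cl.heap
  obtain ⟨g, hg⟩ := γ
  dsimp only at hc ⊢
  erw [Finset.noncommProd_congr ((Finset.insert_erase hc).symm) (fun x _ => rfl),
    Finset.noncommProd_insert_of_notMem _ _ _ _ (Finset.notMem_erase c g)]
  exact ⟨_, rfl⟩

theorem clique_split {γ : Cl I} {s : Finset S} (hs : s ⊆ γ.1) (hp1 : ∀ a ∈ s, ∀ b ∈ s, a ≠ b → I a b)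
    (hp2 : ∀ a ∈ γ.1 \ s, ∀ b ∈ γ.1 \ s, a ≠ b → I a b) :
    γ.heap = Cl.heap ⟨s, hp1⟩ * Cl.heap ⟨γ.1 \ s, hp2⟩ := by
  unfold Cl.heap
  obtain ⟨g, hg⟩ := γ
  dsimp only at hs hp2 ⊢
  erw [Finset.noncommProd_congr ((Finset.union_sdiff_of_subset hs).symm) (fun x _ => rfl),
    Finset.noncommProd_union_of_disjoint Finset.disjoint_sdiff]

-- ppSeq lemmas
theorem ppSeq_zero (c : ℕ → Cl I) : ppSeq c 0 = 1 := rfl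

theorem ppSeq_succ (c : ℕ → Cl I) (n : ℕ) : ppSeq c (n + 1) = ppSeq c n * (c n).heap := by
  unfold ppSeq
  rw [List.range_succ, List.map_append, List.prod_append]
  simp

theorem ppSeq_succ' (c : ℕ → Cl I) (n : ℕ) :
    ppSeq c (n + 1) = (c 0).heap * ppSeq (fun k => c (k + 1)) n := by
  unfold ppSeq
  rw [List.range_succ_eq_map]
  simp [List.map_map, Function.comp_def]

theorem ppSeq_le_ppSeq (c : ℕ → Cl I) {n m : ℕ} (h : n ≤ m) : hLe (ppSeq c n) (ppSeq c m) := by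
  induction m, h using Nat.le_induction with
  | base => exact hLe_refl _
  | succ m hm ih =>
    rw [ppSeq_succ]
    exact hLe_trans ih (hLe_mul_right _ _)

theorem ppSeq_congr {c c' : ℕ → Cl I} (n : ℕ) (h : ∀ k, k < n → c k = c' k) :
    ppSeq c n = ppSeq c' n := by
  unfold ppSeq
  congr 1
  refine List.map_congr_left fun k hk => ?_
  rw [h k (List.mem_range.mp hk)]

theorem ppSeq_empty (n : ℕ) : ppSeq (fun _ => emptyCl I) n = 1 := by
  induction n with
  | zero => rfl
  | succ n ih => rw [ppSeq_succ, ih, emptyCl_heap, one_mul]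

theorem ppSeq_stable {c : ℕ → Cl I} {N : ℕ} (h : ∀ k, N ≤ k → c k = emptyCl I) {n : ℕ}
    (hn : N ≤ n) : ppSeq c n = ppSeq c N := by
  induction n, hn using Nat.le_induction with
  | base => rfl
  | succ n hn ih => rw [ppSeq_succ, h n hn, emptyCl_heap, mul_one, ih]

-- Move lemmas
theorem move_to_empty (γ : Cl I) : Move γ (emptyCl I) := by
  intro b hb
  simp [emptyCl] at hb

theorem move_from_empty {γ : Cl I} (h : Move (emptyCl I) γ) : γ = emptyCl I := by
  refine Subtype.ext (Finset.eq_empty_of_forall_notMem fun b hb => ?_)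
  obtain ⟨a, ha, -⟩ := h b hb
  simp [emptyCl] at ha

-- cf machinery
variable (hCF : ∀ x : Heap I, ∃! c : ℕ → Cl I, CFprop I c x)
include hCF

theorem cf_spec (x : Heap I) : CFprop I (cf I x) x := by
  unfold cf
  split
  next h => exact h.choose_spec
  next h => exact absurd (hCF x).exists h

theorem cf_unique {c : ℕ → Cl I} {x : Heap I} (h : CFprop I c x) : c = cf I x :=
  (hCF x).unique h (cf_spec hCF x)

theorem CFprop_one : CFprop I (fun _ => emptyCl I) 1 :=
  ⟨fun _ => move_to_empty _, 0, fun n _ => ⟨ppSeq_empty n, rfl⟩⟩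

theorem cf_one : cf I 1 = fun _ => emptyCl I := (cf_unique hCF (CFprop_one hCF)).symm

omit hCF in
theorem CFprop_one' : CFprop I (fun _ => emptyCl I) 1 :=
  ⟨fun _ => move_to_empty _, 0, fun n _ => ⟨ppSeq_empty n, rfl⟩⟩

theorem prefix_le (x : Heap I) (n : ℕ) : hLe (ppSeq (cf I x) n) x := by
  obtain ⟨N, hN⟩ := (cf_spec hCF x).2
  rcases le_total n N with h | h
  · conv_rhs => rw [← (hN N le_rfl).1]
    exact ppSeq_le_ppSeq _ h
  · rw [(hN n h).1]
    exact hLe_refl x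

theorem cf_peel (x : Heap I) :
    ∃ x₁ : Heap I, x = (cf I x 0).heap * x₁ ∧ cf I x₁ = fun k => cf I x (k + 1) := by
  obtain ⟨N, hN⟩ := (cf_spec hCF x).2
  refine ⟨ppSeq (fun k => cf I x (k + 1)) N, ?_, ?_⟩
  · have h1 : ppSeq (cf I x) (N + 1) = x := (hN (N + 1) (by omega)).1
    conv_lhs => rw [← h1]
    exact ppSeq_succ' _ _
  · refine (cf_unique hCF ⟨fun n => (cf_spec hCF x).1 (n + 1), N, fun n hn => ⟨?_, (hN (n + 1) (by omega)).2⟩⟩).symm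
    exact ppSeq_stable (fun k hk => (hN (k + 1) (by omega)).2) hn

theorem cf_first_empty {x : Heap I} (h : cf I x 0 = emptyCl I) : x = 1 := by
  have hall : ∀ k, cf I x k = emptyCl I := by
    intro k
    induction k with
    | zero => exact h
    | succ k ih =>
      have := (cf_spec hCF x).1 k
      rw [ih] at this
      exact move_from_empty this
  obtain ⟨N, hN⟩ := (cf_spec hCF x).2
  rw [← (hN N le_rfl).1, ppSeq_congr N (fun k _ => hall k), ppSeq_empty]

theorem c1 (hsymm : ∀ a b : S, I a b → I b a) {c : S} :
    ∀ (n : ℕ) (x : Heap I), len x ≤ n → (hLe (mkh I [c]) x ↔ c ∈ (cf I x 0).1) := by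
  intro n
  induction n with
  | zero =>
    intro x hx
    have hx1 : x = 1 := len_eq_zero (by omega)
    subst hx1
    constructor
    · intro h
      have := len_le_of_hLe h
      rw [len_mkh, len_one] at this
      simp at this
    · intro h
      rw [cf_one hCF] at h
      simp [emptyCl] at h
  | succ n ih =>
    intro x hx
    obtain ⟨x₁, hpeel, hshift⟩ := cf_peel hCF x
    constructor
    · intro hcx
      by_cases hx1 : x = 1
      · subst hx1
        have := len_le_of_hLe hcx
        rw [len_mkh, len_one] at this
        simp at this
      by_contra hnc
      have hocc0 : occ c (cf I x 0).heap = 0 := by rw [occ_clique, if_neg hnc]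
      have hTT := phi_div.mpr hcx
      rw [hpeel, map_mul] at hTT
      obtain ⟨b, hb⟩ := phi_not_found hocc0
      rw [hb, FF.ff_mul, FF.mk.injEq] at hTT
      obtain ⟨h1, h2⟩ := hTT
      rcases Bool.and_eq_true_iff.mp h2 with ⟨hbt, hcl⟩
      subst hbt
      have hc1 : hLe (mkh I [c]) x₁ := phi_div.mp (by rw [FF.eta (phiHom I c x₁), h1, hcl])
      have hγne : (cf I x 0).1.Nonempty := by
        rw [Finset.nonempty_iff_ne_empty]
        intro hemp
        exact hx1 (cf_first_empty hCF (Subtype.ext hemp))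
      have hlen : len x₁ ≤ n := by
        have hl := congrArg len hpeel
        rw [len_mul, len_clique] at hl
        have := Finset.card_pos.mpr hγne
        omega
      have hmem : c ∈ (cf I x₁ 0).1 := (ih x₁ hlen).mp hc1
      rw [congrFun hshift 0] at hmem
      obtain ⟨e, he, hed⟩ := (cf_spec hCF x).1 0 c hmem
      have hocce : 0 < occ e (cf I x 0).heap := by rw [occ_clique, if_pos he]; omega
      rcases phi_clean_unfound hb e hocce with h | h
      · exact hed h
      · exact hed (hsymm c e h)
    · intro hc
      refine hLe_trans (mem_clique_hLe hc) ⟨x₁, hpeel⟩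

theorem c1' (hsymm : ∀ a b : S, I a b → I b a) {c : S} (x : Heap I) :
    hLe (mkh I [c]) x ↔ c ∈ (cf I x 0).1 := c1 hCF hsymm (len x) x le_rfl

omit hCF in
theorem ppSeq_trunc (c : ℕ → Cl I) (n : ℕ) :
    ∀ m, ppSeq (fun k => if k < n then c k else emptyCl I) m = ppSeq c (min m n) := by
  intro m
  induction m with
  | zero => simp [ppSeq_zero]
  | succ m ih =>
    rw [ppSeq_succ, ih]
    by_cases hmn : m < n
    · rw [if_pos hmn, min_eq_left (by omega), min_eq_left (by omega), ppSeq_succ]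
    · rw [if_neg hmn, emptyCl_heap, mul_one, min_eq_right (by omega), min_eq_right (by omega)]

theorem cf_trunc (c : ℕ → Cl I) (hadm : ∀ k, Move (c k) (c (k + 1))) (n : ℕ) :
    cf I (ppSeq c n) = fun k => if k < n then c k else emptyCl I := by
  refine (cf_unique hCF ⟨?_, n, fun m hm => ⟨?_, ?_⟩⟩).symm
  · intro k
    by_cases hk1 : k + 1 < n
    · rw [if_pos (by omega), if_pos hk1]
      exact hadm k
    · by_cases hk : k < n
      · rw [if_pos hk, if_neg hk1]
        exact move_to_empty _
      · rw [if_neg hk, if_neg hk1]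
        exact move_to_empty _
  · rw [ppSeq_trunc, min_eq_right hm]
  · rw [if_neg (by omega)]

-- stripping lemma
omit hCF in
theorem strip (hsymm : ∀ a b : S, I a b → I b a) (hirr : ∀ a : S, ¬ I a a) :
    ∀ (s : Finset S) (hpair : ∀ a ∈ s, ∀ b ∈ s, a ≠ b → I a b) (B z : Heap I),
    (∀ d ∈ s, ¬ hLe (mkh I [d]) z) → hLe z (Cl.heap ⟨s, hpair⟩ * B) →
    hLe z B ∧ ∀ d ∈ s, ∀ e, 0 < occ e z → I e d := by
  intro s
  induction s using Finset.induction_on with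
  | empty =>
    intro hpair B z _ hz
    have h1 : Cl.heap (I := I) ⟨∅, hpair⟩ = 1 := Finset.noncommProd_empty _ _
    rw [h1, one_mul] at hz
    exact ⟨hz, fun d hd => by simp at hd⟩
  | insert a s' hnotmem ih =>
    intro hpair B z hnd hz
    have hsub : ∀ x ∈ s', ∀ y ∈ s', x ≠ y → I x y := fun x hx y hy =>
      hpair x (Finset.mem_insert_of_mem hx) y (Finset.mem_insert_of_mem hy)
    have heq : Cl.heap (I := I) ⟨insert a s', hpair⟩ = mkh I [a] * Cl.heap ⟨s', hsub⟩ := by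
      unfold Cl.heap
      erw [Finset.noncommProd_insert_of_notMem _ _ _ _ hnotmem]
      rfl
    rw [heq, mul_assoc] at hz
    obtain ⟨hindA, hz'⟩ := side hsymm hirr rfl hz (hnd a (Finset.mem_insert_self a s'))
    obtain ⟨hB, hind⟩ := ih hsub B z (fun d hd => hnd d (Finset.mem_insert_of_mem hd)) hz'
    refine ⟨hB, fun d hd e he => ?_⟩
    rcases Finset.mem_insert.mp hd with rfl | hd'
    · exact hindA e he
    · exact hind d hd' e he

-- Cartier–Foata monotonicity
theorem cf_mono (hsymm : ∀ a b : S, I a b → I b a) (hirr : ∀ a : S, ¬ I a a)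
    {u v : Heap I} (huv : hLe u v) :
    ∀ n, hLe (ppSeq (cf I u) n) (ppSeq (cf I v) n) := by
  intro n
  induction n generalizing u v with
  | zero => exact hLe_refl _
  | succ n ih =>
    by_cases hu1 : u = 1
    · subst hu1
      rw [cf_one hCF, ppSeq_empty]
      exact one_hLe _
    have hv1 : v ≠ 1 := by
      rintro rfl
      exact hu1 (hLe_one huv)
    obtain ⟨u₁, hup, hus⟩ := cf_peel hCF u
    obtain ⟨v₁, hvp, hvs⟩ := cf_peel hCF v
    have hsub : (cf I u 0).1 ⊆ (cf I v 0).1 := by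
      intro c hc
      exact (c1' hCF hsymm v).mp (hLe_trans ((c1' hCF hsymm u).mpr hc) huv)
    have hΔpair : ∀ a ∈ (cf I v 0).1 \ (cf I u 0).1, ∀ b ∈ (cf I v 0).1 \ (cf I u 0).1,
        a ≠ b → I a b := fun a ha b hb hab =>
      (cf I v 0).2 a (Finset.mem_sdiff.mp ha).1 b (Finset.mem_sdiff.mp hb).1 hab
    set Δ : Cl I := ⟨(cf I v 0).1 \ (cf I u 0).1, hΔpair⟩ with hΔ
    have hsplit : (cf I v 0).heap = (cf I u 0).heap * Δ.heap := by
      have := clique_split (γ := cf I v 0) hsub (cf I u 0).2 hΔpair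
      rw [this]
      rfl
    have hu₁Δ : hLe u₁ (Δ.heap * v₁) := by
      obtain ⟨t, ht⟩ := huv
      refine ⟨t, heap_cancel_left hirr (x := (cf I u 0).heap) ?_⟩
      calc (cf I u 0).heap * (Δ.heap * v₁) = ((cf I u 0).heap * Δ.heap) * v₁ :=
            (mul_assoc _ _ _).symm
        _ = (cf I v 0).heap * v₁ := by rw [← hsplit]
        _ = v := hvp.symm
        _ = u * t := ht
        _ = ((cf I u 0).heap * u₁) * t := by rw [← hup]
        _ = (cf I u 0).heap * (u₁ * t) := mul_assoc _ _ _
    have hnb : ∀ d ∈ (cf I v 0).1 \ (cf I u 0).1, ¬ hLe (mkh I [d]) u₁ := by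
      intro d hd hdu₁
      have hd1 : d ∈ (cf I u 1).1 := by
        have := (c1' hCF hsymm u₁).mp hdu₁
        rwa [congrFun hus 0] at this
      obtain ⟨e, he, hed⟩ := (cf_spec hCF u).1 0 d hd1
      have hdv : hLe (mkh I [d]) v := (c1' hCF hsymm v).mpr (Finset.mem_sdiff.mp hd).1
      have hzv : hLe ((cf I u 0).heap * mkh I [d]) v := by
        refine hLe_trans ?_ huv
        obtain ⟨q, hq⟩ := hdu₁
        refine ⟨q, ?_⟩
        conv_lhs => rw [hup, hq]
        exact (mul_assoc _ _ _).symm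
      have hoccd : 0 < occ d ((cf I u 0).heap * mkh I [d]) := by
        rw [occ_mul, occ_single, if_pos rfl]
        omega
      have hdz := firsta hdv hzv hoccd
      have hTT := phi_div.mpr hdz
      have hocc0 : occ d (cf I u 0).heap = 0 := by
        rw [occ_clique, if_neg (Finset.mem_sdiff.mp hd).2]
      obtain ⟨b, hb⟩ := phi_not_found hocc0
      rw [map_mul, hb, FF.ff_mul, FF.mk.injEq] at hTT
      obtain ⟨h1, h2⟩ := hTT
      rcases Bool.and_eq_true_iff.mp h2 with ⟨hbt, -⟩
      subst hbt
      have hocce : 0 < occ e (cf I u 0).heap := by rw [occ_clique, if_pos he]; omega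
      rcases phi_clean_unfound hb e hocce with h | h
      · exact hed h
      · exact hed (hsymm d e h)
    obtain ⟨hu₁v₁, hind⟩ := strip hsymm hirr ((cf I v 0).1 \ (cf I u 0).1) hΔpair v₁ u₁ hnb hu₁Δ
    obtain ⟨r, hr⟩ := ih hu₁v₁
    have hA_le : hLe (ppSeq (cf I u₁) n) u₁ := prefix_le hCF u₁ n
    have hcomm : Δ.heap * ppSeq (cf I u₁) n = ppSeq (cf I u₁) n * Δ.heap := by
      refine comm_heap fun d e hd he => ?_
      have hdΔ : d ∈ (cf I v 0).1 \ (cf I u 0).1 := by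
        by_contra hcon
        rw [occ_clique] at hd
        rw [if_neg hcon] at hd
        omega
      have heu₁ : 0 < occ e u₁ := lt_of_lt_of_le he (occ_le_of_hLe e hA_le)
      exact hsymm e d (hind d hdΔ e heu₁)
    have e1 : ppSeq (cf I u) (n + 1) = (cf I u 0).heap * ppSeq (cf I u₁) n := by
      rw [ppSeq_succ']
      congr 1
      exact ppSeq_congr n fun k _ => (congrFun hus k).symm
    have e2 : ppSeq (cf I v) (n + 1) = (cf I v 0).heap * ppSeq (cf I v₁) n := by
      rw [ppSeq_succ']
      congr 1
      exact ppSeq_congr n fun k _ => (congrFun hvs k).symm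
    refine ⟨Δ.heap * r, ?_⟩
    rw [e1, e2, hr, hsplit]
    rw [mul_assoc ((cf I u 0).heap) Δ.heap (ppSeq (cf I u₁) n * r),
      ← mul_assoc Δ.heap (ppSeq (cf I u₁) n) r, hcomm,
      mul_assoc (ppSeq (cf I u₁) n) Δ.heap r,
      ← mul_assoc ((cf I u 0).heap) (ppSeq (cf I u₁) n) (Δ.heap * r)]

end AuxCF




section AuxBnd
set_option linter.unusedSectionVars false
variable {I : S → S → Prop} [DecidableEq S]
variable (hCF : ∀ x : Heap I, ∃! c : ℕ → Cl I, CFprop I c x)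
  (hsymm : ∀ a b : S, I a b → I b a) (hirr : ∀ a : S, ¬ I a a)
include hCF hsymm hirr

omit hsymm hirr hCF in
theorem mle_trans {ζ η θ : MB I} (h1 : mLe ζ η) (h2 : mLe η θ) : mLe ζ θ :=
  fun n => hLe_trans (h1 n) (h2 n)

omit hsymm hirr hCF in
theorem mle_refl (ζ : MB I) : mLe ζ ζ := fun n => hLe_refl _

theorem mle_inl_inr {x : Heap I} {ξ : Bnd I} :
    mLe (.inl x) (.inr ξ) ↔ ∃ n, hLe x (ppSeq ξ.1 n) := by
  constructor
  · intro h
    obtain ⟨N, hN⟩ := (cf_spec hCF x).2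
    refine ⟨N, ?_⟩
    have h1 := h N
    show hLe x (ppSeq ξ.1 N)
    rwa [show pp (Sum.inl x : MB I) N = ppSeq (cf I x) N from rfl, (hN N le_rfl).1] at h1
  · rintro ⟨n, hn⟩ m
    show hLe (ppSeq (cf I x) m) (ppSeq ξ.1 m)
    have h1 : hLe (ppSeq (cf I x) m) (ppSeq (cf I (ppSeq ξ.1 n)) m) :=
      cf_mono hCF hsymm hirr hn m
    rw [cf_trunc hCF ξ.1 (fun k => ξ.2.2 k) n, ppSeq_trunc] at h1
    exact hLe_trans h1 (ppSeq_le_ppSeq _ (min_le_left m n))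

theorem mle_inl_inl {x y : Heap I} : mLe (.inl x) (.inl y) ↔ hLe x y := by
  constructor
  · intro h
    obtain ⟨N, hN⟩ := (cf_spec hCF x).2
    obtain ⟨M, hM⟩ := (cf_spec hCF y).2
    have h1 := h (max N M)
    show hLe x y
    rwa [show pp (Sum.inl x : MB I) (max N M) = ppSeq (cf I x) (max N M) from rfl,
      show pp (Sum.inl y : MB I) (max N M) = ppSeq (cf I y) (max N M) from rfl,
      (hN _ (le_max_left _ _)).1, (hM _ (le_max_right _ _)).1] at h1
  · intro h n
    exact cf_mono hCF hsymm hirr h n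

omit hsymm hirr hCF in
theorem len_ppSeq_ge (ξ : Bnd I) (n : ℕ) : n ≤ len (ppSeq ξ.1 n) := by
  induction n with
  | zero => omega
  | succ n ih =>
    rw [ppSeq_succ, len_mul, len_clique]
    have := Finset.card_pos.mpr (ξ.2.1 n)
    omega

omit hsymm hirr in
theorem not_mle_inr_inl {ξ : Bnd I} {x : Heap I} (h : mLe (.inr ξ) (.inl x)) : False := by
  have h1 := h (len x + 1)
  rw [show pp (Sum.inr ξ : MB I) (len x + 1) = ppSeq ξ.1 (len x + 1) from rfl,
    show pp (Sum.inl x : MB I) (len x + 1) = ppSeq (cf I x) (len x + 1) from rfl] at h1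
  have h2 := len_le_of_hLe h1
  have h3 := len_le_of_hLe (prefix_le hCF x (len x + 1))
  have h4 := len_ppSeq_ge ξ (len x + 1)
  omega

theorem mle_antisymm {ζ η : MB I} (h1 : mLe ζ η) (h2 : mLe η ζ) : ζ = η := by
  match ζ, η with
  | .inl x, .inl y =>
    rw [hLe_antisymm ((mle_inl_inl hCF hsymm hirr).mp h1) ((mle_inl_inl hCF hsymm hirr).mp h2)]
  | .inl x, .inr ξ => exact absurd h2 (fun h => not_mle_inr_inl hCF h)
  | .inr ξ, .inl y => exact absurd h1 (fun h => not_mle_inr_inl hCF h)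
  | .inr ξ, .inr ξ' =>
    have hpp : ∀ n, ppSeq ξ.1 n = ppSeq ξ'.1 n := fun n => hLe_antisymm (h1 n) (h2 n)
    have hocccl : ∀ n d, occ d (ξ.1 n).heap = occ d (ξ'.1 n).heap := by
      intro n d
      have e1 := congrArg (occ d) (hpp (n + 1))
      have e2 := congrArg (occ d) (hpp n)
      rw [ppSeq_succ, ppSeq_succ, occ_mul, occ_mul, e2] at e1
      omega
    have hcl : ∀ n, ξ.1 n = ξ'.1 n := by
      intro n
      refine Subtype.ext (Finset.ext fun d => ?_)
      have := hocccl n d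
      rw [occ_clique, occ_clique] at this
      by_cases h1 : d ∈ (ξ.1 n).1 <;> by_cases h2 : d ∈ (ξ'.1 n).1 <;>
        simp [h1, h2] at this ⊢
    rw [show ξ = ξ' from Subtype.ext (funext hcl)]

end AuxBnd


theorem hit_spec {I : S → S → Prop} [DecidableEq S]
    (hhit : ∀ (a : S) (ξ : Bnd I), ∃ ζ : MB I, IsHit a ξ ζ) (a : S) (ξ : Bnd I) :
    IsHit a ξ (hit a ξ) := by
  unfold hit
  convert (hhit a ξ).choose_spec using 1
  exact dif_pos (hhit a ξ)

theorem firstHittingTime_isAST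
    {S : Type} [Fintype S] [DecidableEq S] (I : S → S → Prop)
    (hsymm : ∀ a b : S, I a b → I b a)
    (hirr : ∀ a : S, ¬ I a a)
    (hconn : ∀ a b : S, Relation.ReflTransGen (fun x y : S => x ≠ y ∧ ¬ I x y) a b)
    (hcard : 1 < Fintype.card S)
    (hCF : ∀ x : Heap I, ∃! c : ℕ → Cl I, CFprop I c x)
    (hhit : ∀ (a : S) (ξ : Bnd I), ∃ ζ : MB I, IsHit a ξ ζ)
 :
    ∀ a : S, IsAST (fun ξ : Bnd I => hit a ξ) := by
  intro a
  refine ⟨fun ξ => (hit_spec hhit a ξ).1, fun ξ ξ' x hx hle => ?_⟩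
  simp only at hx ⊢
  have H := hit_spec hhit a ξ
  rw [hx] at H
  obtain ⟨A1, A2, A3⟩ := H
  obtain ⟨B1, B2, B3⟩ := hit_spec hhit a ξ'
  -- Step 1: some finite prefix of ξ contains an occurrence of a
  have hne : ∃ y : Heap I, mLe (.inl y) (.inr ξ) ∧ 0 < occ a y := by
    by_contra hcon
    push_neg at hcon
    have hA := A3 (.inr ξ) (mle_refl _) (fun y hy hocc => absurd hocc (by
      have := hcon y hy
      omega))
    exact not_mle_inr_inl hCF hA
  obtain ⟨y0, hy0, hy0a⟩ := hne
  obtain ⟨n0, hy0n⟩ := (mle_inl_inr hCF hsymm hirr).mp hy0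
  have hYocc : 0 < occ a (ppSeq ξ.1 n0) := lt_of_lt_of_le hy0a (occ_le_of_hLe a hy0n)
  obtain ⟨x₀, hx₀Y, hx₀a, hx₀min⟩ := key hsymm hirr hYocc
  have hx₀ξ : mLe (.inl x₀) (.inr ξ) := (mle_inl_inr hCF hsymm hirr).mpr ⟨n0, hx₀Y⟩
  -- Step 2: x₀ is below every finite prefix of ξ containing a
  have hLB : ∀ y : Heap I, mLe (.inl y) (.inr ξ) → 0 < occ a y → hLe x₀ y := by
    intro y hy hya
    obtain ⟨m, hym⟩ := (mle_inl_inr hCF hsymm hirr).mp hy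
    have hYU : hLe (ppSeq ξ.1 n0) (ppSeq ξ.1 (max n0 m)) := ppSeq_le_ppSeq _ (le_max_left _ _)
    have hyU : hLe y (ppSeq ξ.1 (max n0 m)) :=
      hLe_trans hym (ppSeq_le_ppSeq _ (le_max_right _ _))
    have hUocc : 0 < occ a (ppSeq ξ.1 (max n0 m)) :=
      lt_of_lt_of_le hYocc (occ_le_of_hLe a hYU)
    obtain ⟨x₁, hx₁U, hx₁a, hx₁min⟩ := key hsymm hirr hUocc
    have h1 : hLe x₁ x₀ := hx₁min x₀ (hLe_trans hx₀Y hYU) hx₀a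
    have h2 : hLe x₀ x₁ := hx₀min x₁ (hLe_trans h1 hx₀Y) hx₁a
    rw [hLe_antisymm h2 h1]
    exact hx₁min y hyU hya
  -- Step 3: x contains an occurrence of a
  have hx₀x : hLe x₀ x := by
    have hA := A3 (.inl x₀) hx₀ξ
      (fun y hy hya => (mle_inl_inl hCF hsymm hirr).mpr (hLB y hy hya))
    exact (mle_inl_inl hCF hsymm hirr).mp hA
  have hxa : 0 < occ a x := lt_of_lt_of_le hx₀a (occ_le_of_hLe a hx₀x)
  -- Step 4: x is below every finite prefix of ξ' containing a
  obtain ⟨Nx, hNx⟩ := (mle_inl_inr hCF hsymm hirr).mp A1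
  have hLB' : ∀ y : Heap I, mLe (.inl y) (.inr ξ') → 0 < occ a y →
      mLe (Sum.inl x : MB I) (.inl y) := by
    intro y hy hya
    obtain ⟨m, hym⟩ := (mle_inl_inr hCF hsymm hirr).mp hy
    obtain ⟨m', hxm'⟩ := (mle_inl_inr hCF hsymm hirr).mp hle
    have hyU : hLe y (ppSeq ξ'.1 (max m m')) :=
      hLe_trans hym (ppSeq_le_ppSeq _ (le_max_left _ _))
    have hxU : hLe x (ppSeq ξ'.1 (max m m')) :=
      hLe_trans hxm' (ppSeq_le_ppSeq _ (le_max_right _ _))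
    have hUocc : 0 < occ a (ppSeq ξ'.1 (max m m')) :=
      lt_of_lt_of_le hxa (occ_le_of_hLe a hxU)
    obtain ⟨x₂, hx₂U, hx₂a, hx₂min⟩ := key hsymm hirr hUocc
    have hx₂x : hLe x₂ x := hx₂min x hxU hxa
    have hx₂ξ : mLe (.inl x₂) (.inr ξ) :=
      (mle_inl_inr hCF hsymm hirr).mpr ⟨Nx, hLe_trans hx₂x hNx⟩
    have hxx₂ : mLe (Sum.inl x : MB I) (.inl x₂) := A2 x₂ hx₂ξ hx₂a
    exact (mle_inl_inl hCF hsymm hirr).mpr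
      (hLe_trans ((mle_inl_inl hCF hsymm hirr).mp hxx₂) (hx₂min y hyU hya))
  -- conclude
  have hfin1 : mLe (hit a ξ') (Sum.inl x : MB I) := B2 x hle hxa
  have hfin2 : mLe (Sum.inl x : MB I) (hit a ξ') := B3 (.inl x) hle hLB'
  rw [hx]
  exact mle_antisymm hCF hsymm hirr hfin1 hfin2


end HeapPaper
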